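/- Let q > 1 and c > 1. Then for every integer n ≥ 2 and every integer j with 1 ≤ j ≤ n-1, ((1-q^{-jc})(1-q^{-(n-j)c}))/((1-q^{-j})(1-q^{-(n-j)})) ≤ c(1-q^{-nc})/(1-q^{-n}). -/

import Mathlib

open Real

/-- `1 - exp (-s) > 0` for `s > 0`. -/
lemma one_sub_exp_pos_of_pos {s : ℝ} (hs : 0 < s) : 0 < 1 - Real.exp (-s) := by
  have : Real.exp (-s) < 1 := Real.exp_lt_one_iff.mpr (by linarith)
  linarith

/-- Subadditivity-type inequality for `r / (e^r - 1)`. -/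
lemma phi_subadd {a b : ℝ} (ha : 0 < a) (hb : 0 < b) :
    a / (Real.exp a - 1) + b / (Real.exp b - 1) ≤
      1 + (a + b) / (Real.exp (a + b) - 1) := by
  have hea : a + 1 < Real.exp a := Real.add_one_lt_exp (ne_of_gt ha)
  have heb : b + 1 < Real.exp b := Real.add_one_lt_exp (ne_of_gt hb)
  set u : ℝ := Real.exp a - 1 with hu
  set v : ℝ := Real.exp b - 1 with hv
  have hu0 : 0 < u := by simp [hu]; linarith
  have hv0 : 0 < v := by simp [hv]; linarith
  have hw : Real.exp (a + b) - 1 = u + v + u * v := by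
    rw [Real.exp_add, hu, hv]; ring
  -- sinh bounds: exp a - exp (-a) ≥ 2 a, i.e. 2 a exp a ≤ (exp a)^2 - 1
  have hsa : a < Real.sinh a := Real.self_lt_sinh_iff.mpr ha
  have hsb : b < Real.sinh b := Real.self_lt_sinh_iff.mpr hb
  have hea2 : 2 * a * Real.exp a ≤ Real.exp a ^ 2 - 1 := by
    have h1 : Real.exp a - Real.exp (-a) ≥ 2 * a := by
      rw [Real.sinh_eq] at hsa; linarith
    have h2 : Real.exp (-a) * Real.exp a = 1 := by
      rw [← Real.exp_add]; simp
    nlinarith [Real.exp_pos a, h1, h2]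
  have heb2 : 2 * b * Real.exp b ≤ Real.exp b ^ 2 - 1 := by
    have h1 : Real.exp b - Real.exp (-b) ≥ 2 * b := by
      rw [Real.sinh_eq] at hsb; linarith
    have h2 : Real.exp (-b) * Real.exp b = 1 := by
      rw [← Real.exp_add]; simp
    nlinarith [Real.exp_pos b, h1, h2]
  -- key polynomial facts : 2 (u - a)(1 + u) ≥ u^2 and likewise for v
  have hA : u ^ 2 ≤ 2 * (u - a) * (1 + u) := by
    have : (1 : ℝ) + u = Real.exp a := by rw [hu]; ring
    nlinarith [hea2]
  have hB : v ^ 2 ≤ 2 * (v - b) * (1 + v) := by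
    have : (1 : ℝ) + v = Real.exp b := by rw [hv]; ring
    nlinarith [heb2]
  have hpos : (0:ℝ) < u * v * (u + v + u * v) := by positivity
  rw [hw, ← mul_le_mul_iff_of_pos_right hpos]
  have l1 : (a / u + b / v) * (u * v * (u + v + u * v))
      = (a * v + b * u) * (u + v + u * v) := by
    field_simp
  have l2 : (1 + (a + b) / (u + v + u * v)) * (u * v * (u + v + u * v))
      = u * v * (u + v + u * v) + (a + b) * (u * v) := by
    field_simp
  rw [l1, l2]
  nlinarith [mul_le_mul_of_nonneg_right hA (sq_nonneg v),
    mul_le_mul_of_nonneg_right hB (sq_nonneg u), hu0, hv0,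
    mul_pos hu0 hv0]

lemma exp_sub_one_pos {s : ℝ} (hs : 0 < s) : 0 < Real.exp s - 1 := by
  have := Real.add_one_lt_exp (ne_of_gt hs); linarith

lemma hasDerivAt_log_one_sub_exp {r t : ℝ} (hr : 0 < r) (ht : 0 < t) :
    HasDerivAt (fun s : ℝ => Real.log (1 - Real.exp (-(s * r))))
      (r / (Real.exp (t * r) - 1)) t := by
  have h1 : HasDerivAt (fun s : ℝ => -(s * r)) (-r) t := by
    have h0 := ((hasDerivAt_id t).mul_const r).neg
    simp only [one_mul] at h0
    exact h0
  have h2 := h1.exp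
  have h3 := h2.const_sub 1
  have hpos : 0 < 1 - Real.exp (-(t * r)) := one_sub_exp_pos_of_pos (by positivity)
  have h4 := h3.log (ne_of_gt hpos)
  convert h4 using 1
  have hh : Real.exp (t * r) * Real.exp (-(t * r)) = 1 := by
    rw [← Real.exp_add]; simp
  have hE : 0 < Real.exp (t * r) - 1 := exp_sub_one_pos (by positivity)
  rw [div_eq_div_iff (ne_of_gt hE) (ne_of_gt hpos)]
  nlinarith [hh]

lemma F_antitone_step {x y c : ℝ} (hx : 0 < x) (hy : 0 < y) (hc : 1 ≤ c) :
    (fun t : ℝ => Real.log (1 - Real.exp (-(t * x))) + Real.log (1 - Real.exp (-(t * y)))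
      - Real.log (1 - Real.exp (-(t * (x + y)))) - Real.log t) c ≤
    (fun t : ℝ => Real.log (1 - Real.exp (-(t * x))) + Real.log (1 - Real.exp (-(t * y)))
      - Real.log (1 - Real.exp (-(t * (x + y)))) - Real.log t) 1 := by
  set F : ℝ → ℝ := fun t => Real.log (1 - Real.exp (-(t * x))) + Real.log (1 - Real.exp (-(t * y)))
      - Real.log (1 - Real.exp (-(t * (x + y)))) - Real.log t with hF
  set F' : ℝ → ℝ := fun t => x / (Real.exp (t * x) - 1) + y / (Real.exp (t * y) - 1)
      - (x + y) / (Real.exp (t * (x + y)) - 1) - 1 / t with hF'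
  have hxy : 0 < x + y := by linarith
  have hder : ∀ t : ℝ, 0 < t → HasDerivAt F (F' t) t := by
    intro t ht
    have d1 := hasDerivAt_log_one_sub_exp hx ht
    have d2 := hasDerivAt_log_one_sub_exp hy ht
    have d3 := hasDerivAt_log_one_sub_exp hxy ht
    have d4 := Real.hasDerivAt_log (ne_of_gt ht)
    have := ((d1.add d2).sub d3).sub d4
    exact this.congr_deriv (by simp [hF', one_div])
  have hmono : AntitoneOn F (Set.Ici (1:ℝ)) := by
    apply antitoneOn_of_deriv_nonpos (convex_Ici 1)
    · intro t ht
      exact (hder t (lt_of_lt_of_le one_pos ht)).continuousAt.continuousWithinAt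
    · intro t ht
      rw [interior_Ici] at ht
      exact ((hder t (lt_trans one_pos ht)).differentiableAt).differentiableWithinAt
    · intro t ht
      rw [interior_Ici] at ht
      have ht0 : 0 < t := lt_trans one_pos ht
      rw [(hder t ht0).deriv]
      have key := phi_subadd (mul_pos ht0 hx) (mul_pos ht0 hy)
      have hEx : 0 < Real.exp (t * x) - 1 := exp_sub_one_pos (by positivity)
      have hEy : 0 < Real.exp (t * y) - 1 := exp_sub_one_pos (by positivity)
      have hExy : 0 < Real.exp (t * (x + y)) - 1 := exp_sub_one_pos (by positivity)
      have hsum : t * (x + y) = t * x + t * y := by ring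
      rw [hsum] at hExy
      have hrw : F' t = ((t * x) / (Real.exp (t * x) - 1) + (t * y) / (Real.exp (t * y) - 1)
          - (1 + (t * x + t * y) / (Real.exp (t * x + t * y) - 1))) / t := by
        simp only [hF']
        rw [hsum]
        field_simp
        ring
      rw [hrw]
      exact div_nonpos_of_nonpos_of_nonneg (by linarith [key]) ht0.le
  exact hmono (Set.mem_Ici.mpr le_rfl) (Set.mem_Ici.mpr hc) hc

lemma key_exp {x y c : ℝ} (hx : 0 < x) (hy : 0 < y) (hc : 1 ≤ c) :
    (1 - Real.exp (-(c * x))) * (1 - Real.exp (-(c * y))) * (1 - Real.exp (-(x + y))) ≤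
      c * ((1 - Real.exp (-(c * (x + y)))) * ((1 - Real.exp (-x)) * (1 - Real.exp (-y)))) := by
  have hc0 : 0 < c := lt_of_lt_of_le one_pos hc
  have p1 : 0 < 1 - Real.exp (-(c * x)) := one_sub_exp_pos_of_pos (by positivity)
  have p2 : 0 < 1 - Real.exp (-(c * y)) := one_sub_exp_pos_of_pos (by positivity)
  have p3 : 0 < 1 - Real.exp (-(x + y)) := one_sub_exp_pos_of_pos (by positivity)
  have p4 : 0 < 1 - Real.exp (-(c * (x + y))) := one_sub_exp_pos_of_pos (by positivity)
  have p5 : 0 < 1 - Real.exp (-x) := one_sub_exp_pos_of_pos hx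
  have p6 : 0 < 1 - Real.exp (-y) := one_sub_exp_pos_of_pos hy
  have h := F_antitone_step hx hy hc
  simp only [one_mul, Real.log_one, sub_zero] at h
  rw [← Real.log_le_log_iff (by positivity) (by positivity)]
  rw [Real.log_mul (by positivity) (by positivity),
      Real.log_mul (by positivity) (by positivity),
      Real.log_mul (by positivity) (by positivity),
      Real.log_mul (by positivity) (by positivity),
      Real.log_mul (by positivity) (by positivity)]
  linarith [h]

/-- Reversed inequality (2.3): for `q > 1`, `c > 1`, `n ≥ 2` and `1 ≤ j ≤ n - 1`,
`((1-q^{-jc})(1-q^{-(n-j)c}))/((1-q^{-j})(1-q^{-(n-j)})) ≤ c(1-q^{-nc})/(1-q^{-n})`. -/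
theorem q_ratio_ineq_c_gt_one (q c : ℝ) (hq : 1 < q) (hc : 1 < c)
    (n j : ℕ) (hn : 2 ≤ n) (hj1 : 1 ≤ j) (hj2 : j ≤ n - 1) :
    (1 - q ^ (-((j : ℝ) * c))) * (1 - q ^ (-(((n : ℝ) - (j : ℝ)) * c))) /
        ((1 - q ^ (-(j : ℝ))) * (1 - q ^ (-((n : ℝ) - (j : ℝ))))) ≤
      c * (1 - q ^ (-((n : ℝ) * c))) / (1 - q ^ (-(n : ℝ))) := by
  have hq0 : (0:ℝ) < q := by linarith
  have hL : 0 < Real.log q := Real.log_pos hq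
  set L := Real.log q with hLdef
  have hj1' : (1:ℝ) ≤ (j:ℝ) := by exact_mod_cast hj1
  have hjn : j + 1 ≤ n := by omega
  have hjn' : (j:ℝ) + 1 ≤ (n:ℝ) := by exact_mod_cast hjn
  set x : ℝ := (j:ℝ) * L with hxdef
  set y : ℝ := ((n:ℝ) - (j:ℝ)) * L with hydef
  have hx : 0 < x := mul_pos (by linarith) hL
  have hy : 0 < y := mul_pos (by linarith) hL
  have e1 : q ^ (-((j:ℝ) * c)) = Real.exp (-(c * x)) := by
    rw [Real.rpow_def_of_pos hq0]; congr 1; rw [hxdef]; ring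
  have e2 : q ^ (-(((n:ℝ) - (j:ℝ)) * c)) = Real.exp (-(c * y)) := by
    rw [Real.rpow_def_of_pos hq0]; congr 1; rw [hydef]; ring
  have e3 : q ^ (-(j:ℝ)) = Real.exp (-x) := by
    rw [Real.rpow_def_of_pos hq0]; congr 1; rw [hxdef]; ring
  have e4 : q ^ (-((n:ℝ) - (j:ℝ))) = Real.exp (-y) := by
    rw [Real.rpow_def_of_pos hq0]; congr 1; rw [hydef]; ring
  have e5 : q ^ (-((n:ℝ) * c)) = Real.exp (-(c * (x + y))) := by
    rw [Real.rpow_def_of_pos hq0]; congr 1; rw [hxdef, hydef]; ring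
  have e6 : q ^ (-(n:ℝ)) = Real.exp (-(x + y)) := by
    rw [Real.rpow_def_of_pos hq0]; congr 1; rw [hxdef, hydef]; ring
  rw [e1, e2, e3, e4, e5, e6]
  have p3 : 0 < 1 - Real.exp (-(x + y)) := one_sub_exp_pos_of_pos (by positivity)
  have p5 : 0 < 1 - Real.exp (-x) := one_sub_exp_pos_of_pos hx
  have p6 : 0 < 1 - Real.exp (-y) := one_sub_exp_pos_of_pos hy
  rw [div_le_div_iff₀ (by positivity) p3]
  have hk := key_exp hx hy hc.le
  nlinarith [hk]
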